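/- Fix k ≥ 0, n ≥ 1 integers, and for each dyadic interval I choose a dyadic interval J(I) with |I| = 2^k |J(I)| and n ≤ diam(I ∪ J(I))/|I| < n+1 (the choice being injective in I for fixed J-scale classes as in the construction). Let I' be a dyadic interval. Then the measure of the union ⋃{J(I) : I dyadic, I ⊆ I'} is at most C·(2^{-k} log₂(n) + 1)·|I'| for an absolute constant C. -/

import Mathlib

open Real MeasureTheory

structure DyadicI where
  j : ℤ
  k : ℤ

namespace DyadicI

/-- The length `2^j` of a dyadic interval. -/
noncomputable def len (I : DyadicI) : ℝ := (2 : ℝ) ^ I.j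

/-- The underlying set `[k·2^j, (k+1)·2^j)` of a dyadic interval. -/
def toSet (I : DyadicI) : Set ℝ :=
  Set.Ico ((I.k : ℝ) * (2 : ℝ) ^ I.j) (((I.k : ℝ) + 1) * (2 : ℝ) ^ I.j)

/-- The center of a dyadic interval. -/
noncomputable def center (I : DyadicI) : ℝ := ((I.k : ℝ) + 1/2) * (2 : ℝ) ^ I.j

/-- The diameter of the union of two dyadic intervals. -/
noncomputable def diamUnion (I J : DyadicI) : ℝ :=
  max (((I.k : ℝ) + 1) * (2 : ℝ) ^ I.j) (((J.k : ℝ) + 1) * (2 : ℝ) ^ J.j)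
    - min ((I.k : ℝ) * (2 : ℝ) ^ I.j) ((J.k : ℝ) * (2 : ℝ) ^ J.j)

end DyadicI

namespace Statement6Aux

lemma two_zpow_pos (j : ℤ) : (0:ℝ) < 2 ^ j := zpow_pos two_pos j

lemma volume_toSet (I : DyadicI) :
    volume I.toSet = ENNReal.ofReal ((2:ℝ) ^ I.j) := by
  rw [DyadicI.toSet, Real.volume_Ico]
  congr 1
  ring

lemma subset_facts {I I' : DyadicI} (h : I.toSet ⊆ I'.toSet) :
    (I'.k:ℝ) * 2 ^ I'.j ≤ (I.k:ℝ) * 2 ^ I.j ∧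
      ((I.k:ℝ) + 1) * 2 ^ I.j ≤ ((I'.k:ℝ) + 1) * 2 ^ I'.j ∧ I.j ≤ I'.j := by
  have hp := two_zpow_pos I.j
  have hp' := two_zpow_pos I'.j
  have hlt : (I.k:ℝ) * 2 ^ I.j < ((I.k:ℝ) + 1) * 2 ^ I.j := by nlinarith
  rw [DyadicI.toSet, DyadicI.toSet, Set.Ico_subset_Ico_iff hlt] at h
  refine ⟨h.1, h.2, ?_⟩
  have hle : (2:ℝ) ^ I.j ≤ 2 ^ I'.j := by
    have e1 : ((I.k:ℝ) + 1) * 2 ^ I.j = (I.k:ℝ) * 2 ^ I.j + 2 ^ I.j := by ring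
    have e2 : ((I'.k:ℝ) + 1) * 2 ^ I'.j = (I'.k:ℝ) * 2 ^ I'.j + 2 ^ I'.j := by ring
    have := h.1
    have := h.2
    linarith [h.1, h.2, e1 ▸ h.2]
  exact (zpow_le_zpow_iff_right₀ (by norm_num : (1:ℝ) < 2)).mp hle

lemma J_scale {k : ℕ} {I Jv : DyadicI} (h : I.len = (2:ℝ) ^ k * Jv.len) :
    Jv.j = I.j - (k:ℤ) := by
  have : (2:ℝ) ^ I.j = 2 ^ ((k:ℤ) + Jv.j) := by
    rw [zpow_add₀ (by norm_num : (2:ℝ) ≠ 0), zpow_natCast]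
    exact h
  have h2 : I.j = (k:ℤ) + Jv.j := by
    have h3 := (zpow_le_zpow_iff_right₀ (by norm_num : (1:ℝ) < 2)).mp this.le
    have h4 := (zpow_le_zpow_iff_right₀ (by norm_num : (1:ℝ) < 2)).mp this.ge
    omega
  omega

lemma int_le_of_real {p q : ℤ} {t : ℝ} (ht : 0 < t) (h : (p:ℝ) * t ≤ (q:ℝ) * t) :
    p ≤ q := by
  exact_mod_cast le_of_mul_le_mul_right h ht

end Statement6Aux

open Statement6Aux in
/-- for an injective assignment `I ↦ J(I)` of dyadic intervals at eccentricity
`k ≥ 0` and relative distance `n`, the union of the `J(I)` over all `I ⊆ I'` has measure at most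
`C·(2^{-k}·log₂(n) + 1)·|I'|`. -/
theorem statement6 :
    ∃ C : ℝ, 0 < C ∧
    ∀ (k n : ℕ), 1 ≤ n →
    ∀ J : DyadicI → DyadicI, Function.Injective J →
      (∀ I : DyadicI, I.len = (2 : ℝ) ^ k * (J I).len) →
      (∀ I : DyadicI, (n : ℝ) ≤ I.diamUnion (J I) / I.len ∧
        I.diamUnion (J I) / I.len < (n : ℝ) + 1) →
      ∀ I' : DyadicI,
        (volume (⋃ I ∈ {I : DyadicI | I.toSet ⊆ I'.toSet}, (J I).toSet)).toReal ≤
          C * ((2 : ℝ) ^ (-(k : ℝ)) * Real.logb 2 n + 1) * I'.len := by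
  refine ⟨6, by norm_num, ?_⟩
  intro k n hn J hJinj hJlen hJdist I'
  set R : ℕ := Nat.clog 2 (n + 1) with hRdef
  set c : ℝ := (I'.k : ℝ) * 2 ^ I'.j with hc
  set d : ℝ := ((I'.k : ℝ) + 1) * 2 ^ I'.j with hd
  have hdc : d - c = 2 ^ I'.j := by rw [hc, hd]; ring
  have hy : (0:ℝ) < 2 ^ I'.j := two_zpow_pos I'.j
  set B : Set ℝ := Set.Ico (2 * c - d) (2 * d - c) with hB
  -- the finite "small scale" cover
  set A : Set ℝ := ⋃ r ∈ Finset.range (R + 1), ⋃ i ∈ Finset.Ico (I'.k * 2 ^ r)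
      ((I'.k + 1) * 2 ^ r), (J ⟨I'.j - (r:ℤ), i⟩).toSet with hA
  -- n + 1 ≤ 2 ^ R
  have hn2R : (n:ℝ) + 1 ≤ 2 ^ R := by
    have := Nat.le_pow_clog (by norm_num : 1 < 2) (n + 1)
    exact_mod_cast this
  -- pointwise covering
  have hcover : (⋃ I ∈ {I : DyadicI | I.toSet ⊆ I'.toSet}, (J I).toSet) ⊆ A ∪ B := by
    intro x hx
    simp only [Set.mem_iUnion, Set.mem_setOf_eq] at hx
    obtain ⟨I, hI, hxJ⟩ := hx
    obtain ⟨ha, hb, hj⟩ := subset_facts hI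
    have hpI := two_zpow_pos I.j
    by_cases hr : I'.j - I.j ≤ (R:ℤ)
    · -- small scale: x ∈ A
      left
      set r : ℕ := (I'.j - I.j).toNat with hrdef
      have hjr : I.j = I'.j - (r:ℤ) := by omega
      have hzr : (2:ℝ) ^ (I'.j - (r:ℤ)) * 2 ^ (r:ℤ) = 2 ^ I'.j := by
        rw [← zpow_add₀ (by norm_num : (2:ℝ) ≠ 0)]
        congr 1
        omega
      have h2r : ((2:ℝ) ^ (r:ℤ)) = ((2:ℤ) ^ r : ℤ) := by push_cast [zpow_natCast]; ring
      have hk1 : I'.k * 2 ^ r ≤ I.k := by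
        refine int_le_of_real hy ?_
        calc ((I'.k * 2 ^ r : ℤ) : ℝ) * 2 ^ I'.j
            = ((I'.k:ℝ) * 2 ^ I'.j) * 2 ^ (r:ℤ) := by push_cast [zpow_natCast]; ring
          _ ≤ ((I.k:ℝ) * 2 ^ I.j) * 2 ^ (r:ℤ) := by
              have := two_zpow_pos (r:ℤ)
              nlinarith
          _ = (I.k:ℝ) * 2 ^ I'.j := by rw [hjr]; rw [mul_assoc, hzr]
      have hk2 : I.k + 1 ≤ (I'.k + 1) * 2 ^ r := by
        refine int_le_of_real hy ?_
        calc ((I.k + 1 : ℤ) : ℝ) * 2 ^ I'.j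
            = (((I.k:ℝ) + 1) * 2 ^ I.j) * 2 ^ (r:ℤ) := by
              rw [hjr, mul_assoc, hzr]; push_cast; ring
          _ ≤ (((I'.k:ℝ) + 1) * 2 ^ I'.j) * 2 ^ (r:ℤ) := by
              have := two_zpow_pos (r:ℤ)
              nlinarith
          _ = (((I'.k + 1) * 2 ^ r : ℤ) : ℝ) * 2 ^ I'.j := by push_cast [zpow_natCast]; ring
      have hIeq : (⟨I'.j - (r:ℤ), I.k⟩ : DyadicI) = I := by
        have hj2 : I'.j - (r:ℤ) = I.j := by omega
        rw [hj2]
      rw [hA]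
      simp only [Set.mem_iUnion]
      refine ⟨r, ?_, I.k, ?_, ?_⟩
      · simp only [Finset.mem_range]; omega
      · simp only [Finset.mem_Ico]; omega
      · rw [hIeq]; exact hxJ
    · -- large scale: x ∈ B
      right
      set a : ℝ := (I.k:ℝ) * 2 ^ I.j
      set b : ℝ := ((I.k:ℝ) + 1) * 2 ^ I.j with hbdef
      have hab : b = a + 2 ^ I.j := by rw [hbdef]; ring
      have hIlen : I.len = 2 ^ I.j := rfl
      have hdiam : I.diamUnion (J I) < ((n:ℝ) + 1) * 2 ^ I.j := by
        have h1 := (hJdist I).2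
        rw [div_lt_iff₀ (by rw [hIlen]; exact hpI)] at h1
        rw [hIlen] at h1
        linarith [h1]
      have hsmall : ((n:ℝ) + 1) * 2 ^ I.j ≤ 2 ^ I'.j := by
        have h1 : (2:ℝ) ^ I.j ≤ 2 ^ (I'.j - (R:ℤ)) :=
          zpow_le_zpow_right₀ (by norm_num) (by omega)
        have h2 : ((n:ℝ) + 1) * 2 ^ I.j ≤ 2 ^ (R:ℤ) * 2 ^ (I'.j - (R:ℤ)) := by
          have h3 : ((n:ℝ) + 1) ≤ 2 ^ (R:ℤ) := by rw [zpow_natCast]; exact hn2R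
          have := two_zpow_pos (I'.j - (R:ℤ))
          nlinarith
        rw [← zpow_add₀ (by norm_num : (2:ℝ) ≠ 0)] at h2
        have : (R:ℤ) + (I'.j - (R:ℤ)) = I'.j := by ring
        rwa [this] at h2
      have hdlt : I.diamUnion (J I) < d - c := by rw [hdc]; linarith
      -- unfold diamUnion
      set aJ : ℝ := ((J I).k:ℝ) * 2 ^ (J I).j
      set bJ : ℝ := (((J I).k:ℝ) + 1) * 2 ^ (J I).j
      have hdu : I.diamUnion (J I) = max b bJ - min a aJ := rfl
      have hxJ' : aJ ≤ x ∧ x < bJ := hxJ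
      have hmin : min a aJ ≤ aJ := min_le_right _ _
      have hmax : b ≤ max b bJ := le_max_left _ _
      have hmax' : bJ ≤ max b bJ := le_max_right _ _
      have hmin' : min a aJ ≤ a := min_le_left _ _
      constructor
      · -- 2c - d ≤ x
        have : b - I.diamUnion (J I) ≤ aJ := by
          rw [hdu] at hdlt ⊢
          linarith
        have hcb : c ≤ b := by
          have : a < b := by rw [hab]; linarith
          linarith
        linarith [hxJ'.1]
      · -- x < 2d - c
        have : bJ ≤ a + I.diamUnion (J I) := by
          rw [hdu] at hdlt ⊢
          linarith
        have had : a ≤ d := by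
          have : a < b := by rw [hab]; linarith
          linarith
        linarith [hxJ'.2]
  -- measure bounds
  have hvolB : volume B ≤ ENNReal.ofReal (3 * 2 ^ I'.j) := by
    rw [hB, Real.volume_Ico]
    apply ENNReal.ofReal_le_ofReal
    linarith [hdc]
  have hvolA : volume A ≤ ENNReal.ofReal (((R:ℝ) + 1) * 2 ^ (I'.j - (k:ℤ))) := by
    rw [hA]
    refine le_trans (measure_biUnion_finset_le _ _) ?_
    have hterm : ∀ r ∈ Finset.range (R + 1),
        volume (⋃ i ∈ Finset.Ico (I'.k * 2 ^ r) ((I'.k + 1) * 2 ^ r),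
          (J ⟨I'.j - (r:ℤ), i⟩).toSet) ≤ ENNReal.ofReal (2 ^ (I'.j - (k:ℤ))) := by
      intro r _
      refine le_trans (measure_biUnion_finset_le _ _) ?_
      have hIcard : (Finset.Ico (I'.k * 2 ^ r) ((I'.k + 1) * 2 ^ r)).card = 2 ^ r := by
        rw [Int.card_Ico]
        have : (I'.k + 1) * 2 ^ r - I'.k * 2 ^ r = 2 ^ r := by ring
        rw [this]
        have h2 : ((2:ℤ) ^ r) = ((2 ^ r : ℕ) : ℤ) := by push_cast; ring
        rw [h2, Int.toNat_natCast]
      have hvol : ∀ i ∈ Finset.Ico (I'.k * 2 ^ r) ((I'.k + 1) * 2 ^ r),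
          volume (J ⟨I'.j - (r:ℤ), i⟩).toSet
            = ENNReal.ofReal (2 ^ (I'.j - (r:ℤ) - (k:ℤ))) := by
        intro i _
        rw [volume_toSet, J_scale (hJlen ⟨I'.j - (r:ℤ), i⟩)]
      rw [Finset.sum_congr rfl hvol, Finset.sum_const, hIcard, nsmul_eq_mul]
      have h2r : (((2 ^ r : ℕ) : ENNReal)) = ENNReal.ofReal ((2:ℝ) ^ (r:ℤ)) := by
        rw [zpow_natCast, ENNReal.ofReal_pow (by norm_num)]
        norm_num
      rw [h2r, ← ENNReal.ofReal_mul (by positivity)]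
      apply ENNReal.ofReal_le_ofReal
      rw [← zpow_add₀ (by norm_num : (2:ℝ) ≠ 0)]
      apply le_of_eq
      congr 1
      ring
    refine le_trans (Finset.sum_le_sum hterm) ?_
    rw [Finset.sum_const, Finset.card_range, nsmul_eq_mul]
    have : ((R + 1 : ℕ) : ENNReal) = ENNReal.ofReal ((R:ℝ) + 1) := by
      rw [← ENNReal.ofReal_natCast]
      norm_num
    rw [this, ← ENNReal.ofReal_mul (by positivity)]
  have hvol : volume (⋃ I ∈ {I : DyadicI | I.toSet ⊆ I'.toSet}, (J I).toSet)
      ≤ ENNReal.ofReal (((R:ℝ) + 1) * 2 ^ (I'.j - (k:ℤ)) + 3 * 2 ^ I'.j) := by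
    refine le_trans (measure_mono hcover) ?_
    refine le_trans (measure_union_le A B) ?_
    refine le_trans (add_le_add hvolA hvolB) ?_
    rw [← ENNReal.ofReal_add (by positivity) (by positivity)]
  -- go to reals
  have htoreal := ENNReal.toReal_le_of_le_ofReal (by positivity) hvol
  refine le_trans htoreal ?_
  -- final numeric estimate
  have hL : 0 ≤ Real.logb 2 n := Real.logb_nonneg (by norm_num) (by exact_mod_cast hn)
  have hRle : (R:ℝ) ≤ Real.logb 2 n + 1 := by
    have h1 : (2:ℕ) ^ (R - 1) < n + 1 :=
      Nat.pow_pred_clog_lt_self (by norm_num) (by omega)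
    have h2 : (2:ℕ) ^ (R - 1) ≤ n := by omega
    have h3 : ((2:ℝ)) ^ (R - 1) ≤ (n:ℝ) := by exact_mod_cast h2
    have h4 : ((R:ℝ) - 1 : ℝ) ≤ Real.logb 2 n := by
      have h5 : Real.logb 2 ((2:ℝ) ^ (R - 1)) ≤ Real.logb 2 n :=
        Real.logb_le_logb_of_le (by norm_num) (by positivity) h3
      rw [Real.logb_pow, Real.logb_self_eq_one (by norm_num)] at h5
      have h6 : ((R - 1 : ℕ) : ℝ) ≥ (R:ℝ) - 1 := by
        have : R - 1 + 1 ≥ R := by omega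
        have := (Nat.cast_le (α := ℝ)).mpr this
        push_cast at this
        linarith
      linarith [h5, h6]
    linarith
  set L : ℝ := Real.logb 2 n
  set x : ℝ := ((2:ℝ) ^ k)⁻¹ with hxdef
  have hxpos : 0 < x := by positivity
  have hx1 : x ≤ 1 := by
    rw [hxdef]
    rw [inv_le_one_iff₀]
    right
    exact one_le_pow₀ (by norm_num)
  have hrpow : (2:ℝ) ^ (-(k:ℝ)) = x := by
    rw [Real.rpow_neg (by norm_num), Real.rpow_natCast]
  have hzsub : (2:ℝ) ^ (I'.j - (k:ℤ)) = 2 ^ I'.j * x := by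
    rw [zpow_sub₀ (by norm_num : (2:ℝ) ≠ 0), zpow_natCast]
    ring
  have hlen' : I'.len = 2 ^ I'.j := rfl
  rw [hrpow, hzsub, hlen']
  have hxL : 0 ≤ x * L := mul_nonneg hxpos.le hL
  nlinarith [mul_le_mul_of_nonneg_right hRle hxpos.le, hy, hxL, hx1, hL,
    mul_nonneg hxL hy.le, mul_le_mul_of_nonneg_right hx1 hy.le]
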